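/- Let (X, μ) be a σ-finite measure space, n ≥ 1, and let f, u₁,…,uₙ, v₁,…,vₙ : X → ℂ be measurable functions such that x ↦ f(x)·u_l(x)·v_m(x) is integrable for all 1 ≤ l, m ≤ n, and such that the function (x₁,…,xₙ) ↦ ∏_{k=1}^n f(x_k) · det_{k,l}[u_l(x_k)] · det_{k,l}[v_l(x_k)] is integrable on Xⁿ with respect to the product measure. Then ∫_{Xⁿ} ∏_{k=1}^n f(x_k) · det_{k,l}[u_l(x_k)] · det_{k,l}[v_l(x_k)] dμⁿ = n! · det_{l,m}[ ∫_X f(x)·u_l(x)·v_m(x) dμ(x) ]. (Andréief-type determinant integration lemma.) -/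

import Mathlib

open MeasureTheory
open Equiv

/-- Andréief-type determinant integration lemma: for a σ-finite measure `μ` on `X`,
`n ≥ 1`, and measurable `f, u₁,…,uₙ, v₁,…,vₙ : X → ℂ` with the stated integrability,
`∫_{Xⁿ} ∏_k f(x_k) · det[u_l(x_k)] · det[v_l(x_k)] dμⁿ
  = n! · det[∫_X f·u_l·v_m dμ]`. -/
theorem stmt_13 {X : Type*} [MeasurableSpace X] (μ : Measure X) [SigmaFinite μ]
    (n : ℕ) (hn : 1 ≤ n) (f : X → ℂ) (u v : Fin n → X → ℂ)
    (hf : Measurable f) (hu : ∀ l, Measurable (u l)) (hv : ∀ l, Measurable (v l))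
    (hint : ∀ l m, Integrable (fun x => f x * u l x * v m x) μ)
    (hint2 : Integrable
      (fun x : Fin n → X =>
        (∏ k, f (x k)) * (Matrix.of fun k l => u l (x k)).det *
          (Matrix.of fun k l => v l (x k)).det)
      (Measure.pi fun _ => μ)) :
    (∫ x : Fin n → X,
        (∏ k, f (x k)) * (Matrix.of fun k l => u l (x k)).det *
          (Matrix.of fun k l => v l (x k)).det ∂(Measure.pi fun _ => μ))
      = (n.factorial : ℂ) *
          (Matrix.of fun l m => ∫ x, f x * u l x * v m x ∂μ).det := by
  letI : MeasureSpace X := ⟨μ⟩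
  set sgnC : Perm (Fin n) → ℂ := fun σ => ((Perm.sign σ : ℤ) : ℂ) with hsgn
  have expand : ∀ x : Fin n → X,
      (∏ k, f (x k)) * (Matrix.of fun k l => u l (x k)).det *
        (Matrix.of fun k l => v l (x k)).det
      = ∑ σ : Perm (Fin n), ∑ τ : Perm (Fin n),
          (sgnC σ * sgnC τ) * ∏ k, (f (x k) * u (σ k) (x k) * v (τ k) (x k)) := by
    intro x
    rw [← Matrix.det_transpose (Matrix.of fun k l => u l (x k)),
        ← Matrix.det_transpose (Matrix.of fun k l => v l (x k))]
    simp only [Matrix.det_apply, Matrix.transpose_apply, Matrix.of_apply]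
    simp only [Matrix.det_apply, Matrix.transpose_apply, Matrix.of_apply, Units.smul_def,
      zsmul_eq_mul, Finset.mul_sum, Finset.sum_mul]
    refine Finset.sum_comm.trans (Finset.sum_congr rfl fun σ _ => Finset.sum_congr rfl fun τ _ => ?_)
    simp only [hsgn, Finset.prod_mul_distrib]
    ring
  have hgint : ∀ σ τ : Perm (Fin n),
      Integrable (fun x : Fin n → X =>
        ∏ k, (f (x k) * u (σ k) (x k) * v (τ k) (x k))) (Measure.pi fun _ => μ) :=
    fun σ τ => Integrable.fintype_prod (f := fun k y => f y * u (σ k) y * v (τ k) y)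
      (fun k => hint (σ k) (τ k))
  calc (∫ x : Fin n → X,
        (∏ k, f (x k)) * (Matrix.of fun k l => u l (x k)).det *
          (Matrix.of fun k l => v l (x k)).det ∂(Measure.pi fun _ => μ))
      = ∫ x : Fin n → X, ∑ σ : Perm (Fin n), ∑ τ : Perm (Fin n),
          (sgnC σ * sgnC τ) * ∏ k, (f (x k) * u (σ k) (x k) * v (τ k) (x k))
          ∂(Measure.pi fun _ => μ) := by
        exact integral_congr_ae (Filter.Eventually.of_forall expand)
    _ = ∑ σ : Perm (Fin n), ∑ τ : Perm (Fin n),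
          (sgnC σ * sgnC τ) * ∏ k, ∫ y, f y * u (σ k) y * v (τ k) y ∂μ := by
        rw [integral_finset_sum _ (fun σ _ => integrable_finset_sum _
          (fun τ _ => ((hgint σ τ).const_mul _)))]
        refine Finset.sum_congr rfl fun σ _ => ?_
        rw [integral_finset_sum _ (fun τ _ => ((hgint σ τ).const_mul _))]
        refine Finset.sum_congr rfl fun τ _ => ?_
        rw [integral_const_mul]
        congr 1
        exact MeasureTheory.integral_fintype_prod_eq_prod (ι := Fin n)
          (fun k y => f y * u (σ k) y * v (τ k) y)
    _ = ∑ σ : Perm (Fin n), ((Matrix.of fun l m => ∫ x, f x * u l x * v m x ∂μ).det) := by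
        refine Finset.sum_congr rfl fun σ _ => ?_
        rw [← Matrix.det_transpose, Matrix.det_apply]
        refine Fintype.sum_equiv (Equiv.mulRight σ⁻¹) _ _ fun π => ?_
        simp only [Equiv.coe_mulRight, Matrix.transpose_apply, Matrix.of_apply,
          Units.smul_def, zsmul_eq_mul, Perm.mul_apply]
        have hp : ∏ j, (∫ x, f x * u j x * v (π (σ⁻¹ j)) x ∂μ)
            = ∏ k, ∫ x, f x * u (σ k) x * v (π k) x ∂μ := by
          rw [← Equiv.prod_comp σ (fun j => ∫ x, f x * u j x * v (π (σ⁻¹ j)) x ∂μ)]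
          simp
        rw [hp]
        have h1 : ((Perm.sign (π * σ⁻¹) : ℤ) : ℂ) = sgnC π * sgnC σ := by
          simp [hsgn, map_mul]
        rw [h1]
        ring
    _ = (n.factorial : ℂ) *
          (Matrix.of fun l m => ∫ x, f x * u l x * v m x ∂μ).det := by
        rw [Finset.sum_const, Finset.card_univ, Fintype.card_perm, Fintype.card_fin,
          nsmul_eq_mul]
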